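/- Let $\phi : \mathbb{R}^d \to \mathbb{R}^d$ be $(L,\lambda)$-Hölder continuous with $L \geq 0$, $\lambda \in (0,1]$, and let $\mu, \nu$ be probability measures on $\mathbb{R}^d$. Then $W_\infty((I+\phi)_\sharp \mu, (I+\phi)_\sharp \nu) \leq W_\infty(\mu,\nu) + L \cdot W_\infty(\mu,\nu)^{\lambda}$, where $I$ is the identity map. -/

import Mathlib

open MeasureTheory ENNReal

/-- The infinite Wasserstein distance between probability measures on `ℝ^d`:
the infimum over couplings of the essential supremum of the distance. -/
noncomputable def Winf {d : ℕ} (μ ν : Measure (EuclideanSpace ℝ (Fin d))) : ℝ≥0∞ :=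
  ⨅ γ ∈ {γ : Measure (EuclideanSpace ℝ (Fin d) × EuclideanSpace ℝ (Fin d)) |
      γ.map Prod.fst = μ ∧ γ.map Prod.snd = ν},
    essSup (fun p => edist p.1 p.2) γ

/-- If `φ` is `(L,λ)`-Hölder continuous, then
`W∞((I+φ)♯μ, (I+φ)♯ν) ≤ W∞(μ,ν) + L · W∞(μ,ν)^λ`. -/
theorem winf_holder_pushforward {d : ℕ}
    (φ : EuclideanSpace ℝ (Fin d) → EuclideanSpace ℝ (Fin d)) (L lam : ℝ)
    (hL : 0 ≤ L) (hlam0 : 0 < lam) (hlam1 : lam ≤ 1)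
    (hφ : ∀ x y, ‖φ x - φ y‖ ≤ L * ‖x - y‖ ^ lam)
    (μ ν : Measure (EuclideanSpace ℝ (Fin d)))
    [IsProbabilityMeasure μ] [IsProbabilityMeasure ν] :
    Winf (μ.map (fun x => x + φ x)) (ν.map (fun x => x + φ x)) ≤
      Winf μ ν + ENNReal.ofReal L * Winf μ ν ^ lam := by
  classical
  set T : EuclideanSpace ℝ (Fin d) → EuclideanSpace ℝ (Fin d) := fun x => x + φ x with hTdef
  -- φ is Hölder, hence continuous
  have hφHolder : HolderWith L.toNNReal lam.toNNReal φ := by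
    intro x y
    rw [edist_dist, dist_eq_norm, edist_dist, dist_eq_norm]
    calc ENNReal.ofReal ‖φ x - φ y‖ ≤ ENNReal.ofReal (L * ‖x - y‖ ^ lam) :=
          ENNReal.ofReal_le_ofReal (hφ x y)
      _ = ENNReal.ofReal L * ENNReal.ofReal (‖x - y‖ ^ lam) := by
          rw [ENNReal.ofReal_mul hL]
      _ = ENNReal.ofReal L * ENNReal.ofReal ‖x - y‖ ^ lam := by
          rw [← ENNReal.ofReal_rpow_of_nonneg (norm_nonneg _) hlam0.le]
      _ = (L.toNNReal : ℝ≥0∞) * ENNReal.ofReal ‖x - y‖ ^ (lam.toNNReal : ℝ) := by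
          rw [Real.coe_toNNReal _ hlam0.le]; rfl
  have hφc : Continuous φ := hφHolder.continuous (by simpa using hlam0)
  have hTm : Measurable T := (measurable_id.add hφc.measurable)
  -- pointwise edist bound for T
  have key : ∀ x y : EuclideanSpace ℝ (Fin d), edist (T x) (T y) ≤ edist x y + ENNReal.ofReal L * edist x y ^ lam := by
    intro x y
    have hsub : T x - T y = (x - y) + (φ x - φ y) := by
      simp only [T]; abel
    have h1 : ‖T x - T y‖ ≤ ‖x - y‖ + L * ‖x - y‖ ^ lam := by
      rw [hsub]
      exact (norm_add_le _ _).trans (by gcongr; exact hφ x y)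
    calc edist (T x) (T y) = ENNReal.ofReal ‖T x - T y‖ := by
          rw [edist_dist, dist_eq_norm]
      _ ≤ ENNReal.ofReal (‖x - y‖ + L * ‖x - y‖ ^ lam) := ENNReal.ofReal_le_ofReal h1
      _ = ENNReal.ofReal ‖x - y‖ + ENNReal.ofReal L * ENNReal.ofReal ‖x - y‖ ^ lam := by
          rw [ENNReal.ofReal_add (norm_nonneg _) (mul_nonneg hL (Real.rpow_nonneg (norm_nonneg _) _)),
            ENNReal.ofReal_mul hL, ENNReal.ofReal_rpow_of_nonneg (norm_nonneg _) hlam0.le]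
      _ = edist x y + ENNReal.ofReal L * edist x y ^ lam := by
          rw [edist_dist, dist_eq_norm]
  -- main step: for any t above Winf μ ν
  have main : ∀ t : ℝ≥0∞, Winf μ ν < t →
      Winf (μ.map T) (ν.map T) ≤ t + ENNReal.ofReal L * t ^ lam := by
    intro t ht
    rw [Winf, iInf_lt_iff] at ht
    obtain ⟨γ, hγ⟩ := ht
    rw [iInf_lt_iff] at hγ
    obtain ⟨⟨hγ1, hγ2⟩, hγlt⟩ := hγ
    set γ' : Measure (EuclideanSpace ℝ (Fin d) × EuclideanSpace ℝ (Fin d)) := γ.map (Prod.map T T) with hγ'def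
    have hmapm : Measurable (Prod.map T T) := hTm.prodMap hTm
    have hfst : γ'.map Prod.fst = μ.map T := by
      rw [hγ'def, Measure.map_map measurable_fst hmapm, ← hγ1,
        Measure.map_map hTm measurable_fst]
      rfl
    have hsnd : γ'.map Prod.snd = ν.map T := by
      rw [hγ'def, Measure.map_map measurable_snd hmapm, ← hγ2,
        Measure.map_map hTm measurable_snd]
      rfl
    have hγ'mem : γ' ∈ {γ : Measure (EuclideanSpace ℝ (Fin d) × EuclideanSpace ℝ (Fin d)) |
        γ.map Prod.fst = μ.map T ∧ γ.map Prod.snd = ν.map T} := ⟨hfst, hsnd⟩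
    have hW : Winf (μ.map T) (ν.map T) ≤ essSup (fun p : EuclideanSpace ℝ (Fin d) × EuclideanSpace ℝ (Fin d) => edist p.1 p.2) γ' :=
      iInf₂_le γ' hγ'mem
    refine hW.trans ?_
    have hess : essSup (fun p : EuclideanSpace ℝ (Fin d) × EuclideanSpace ℝ (Fin d) => edist p.1 p.2) γ'
        = essSup (fun p : EuclideanSpace ℝ (Fin d) × EuclideanSpace ℝ (Fin d) => edist (T p.1) (T p.2)) γ := by
      rw [hγ'def, essSup_map_measure (by fun_prop) hmapm.aemeasurable]
      rfl
    rw [hess]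
    set M := essSup (fun p : EuclideanSpace ℝ (Fin d) × EuclideanSpace ℝ (Fin d) => edist p.1 p.2) γ with hMdef
    have hMle : ∀ᵐ p ∂γ, edist (T p.1) (T p.2) ≤ t + ENNReal.ofReal L * t ^ lam := by
      filter_upwards [ENNReal.ae_le_essSup (fun p : EuclideanSpace ℝ (Fin d) × EuclideanSpace ℝ (Fin d) => edist p.1 p.2)] with p hp
      refine (key p.1 p.2).trans ?_
      have h2 : edist p.1 p.2 ≤ t := hp.trans hγlt.le
      gcongr
    exact essSup_le_of_ae_le _ hMle
  -- conclude by right-continuity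
  by_cases hWtop : Winf μ ν = ⊤
  · rw [hWtop]; simp
  · set W := Winf μ ν with hWdef
    have hcont : Continuous (fun x : ℝ≥0∞ => x + ENNReal.ofReal L * x ^ lam) := by
      exact continuous_id.add ((ENNReal.continuous_const_mul ENNReal.ofReal_ne_top).comp
        ENNReal.continuous_rpow_const)
    have hne : (nhdsWithin W (Set.Ioi W)).NeBot := by
      refine nhdsGT_neBot_of_exists_gt ⟨⊤, ?_⟩
      exact lt_top_iff_ne_top.2 hWtop
    have htend : Filter.Tendsto (fun x : ℝ≥0∞ => x + ENNReal.ofReal L * x ^ lam)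
        (nhdsWithin W (Set.Ioi W)) (nhds (W + ENNReal.ofReal L * W ^ lam)) :=
      hcont.continuousAt.tendsto.mono_left nhdsWithin_le_nhds
    refine ge_of_tendsto htend ?_
    filter_upwards [self_mem_nhdsWithin] with t ht
    exact main t ht
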